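/- Let g, h be convex differentiable functions and C a set with x^{(k+1)} minimizing g(x) - ⟨∇h(x^{(k)}), x⟩ over C. If for f = g - h there is μ > 0 such that μ(f(x) - f(x*)) ≤ d_{h*}(∇g(x) + y, ∇h(x)) holds for the particular normal-cone vector y arising from the optimality condition of the update, then f(x^{(k+1)}) - f(x*) ≤ (1/(1+μ))(f(x^{(k)}) - f(x*)). -/
import Mathlib

open RealInnerProductSpace

lemma grad_convex_ineq {d : ℕ} (h : EuclideanSpace ℝ (Fin d) → ℝ)
    (h' : EuclideanSpace ℝ (Fin d) → EuclideanSpace ℝ (Fin d))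
    (hh : ∀ x, HasGradientAt h (h' x) x)
    (hhconv : ConvexOn ℝ Set.univ h)
    (x y : EuclideanSpace ℝ (Fin d)) :
    h x + ⟪h' x, y - x⟫ ≤ h y := by
  set L : ℝ →ᵃ[ℝ] EuclideanSpace ℝ (Fin d) := AffineMap.lineMap x y
  have hφconv : ConvexOn ℝ Set.univ (h ∘ L) := by
    have := (hhconv.comp_affineMap L)
    simpa using this
  have hL : ∀ t : ℝ, HasDerivAt (fun t : ℝ => L t) (y - x) t := by
    intro t
    have : (fun t : ℝ => L t) = fun t : ℝ => t • (y - x) + x := by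
      funext t
      simp [L, AffineMap.lineMap_apply]
    rw [this]
    simpa using ((hasDerivAt_id t).smul_const (y - x)).add_const x
  have h0 : L (0 : ℝ) = x := by simp [L]
  have hder : HasDerivAt (h ∘ L) ⟪h' x, y - x⟫ 0 := by
    have hgrad : HasFDerivAt h ((InnerProductSpace.toDual ℝ _) (h' x)) (L 0) := h0 ▸ (hh x).hasFDerivAt
    have := (hgrad.comp 0 (hL 0).hasFDerivAt).hasDerivAt
    simpa [real_inner_comm] using this
  have hslope := hφconv.deriv_le_slope (Set.mem_univ (0:ℝ)) (Set.mem_univ (1:ℝ))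
    zero_lt_one hder.differentiableAt
  rw [hder.deriv, slope_def_field] at hslope
  have hL1 : L (1 : ℝ) = y := by simp [L]
  simp only [Function.comp_apply, hL1, h0, sub_zero, div_one] at hslope
  linarith

/-- DCA descent under the extended PL condition (Theorem 3.2 of the paper).
`g`, `h` convex differentiable with gradients `g'`, `h'`; `xk1` is the DCA
update from `xk`; `ŷ` is the normal-cone vector from the optimality condition;
`hstar` is the convex conjugate of `h` (via the Fenchel identity); the PL
inequality holds for this particular `ŷ`. -/
theorem dca_linear_descent {d : ℕ}
    (g h : EuclideanSpace ℝ (Fin d) → ℝ)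
    (g' h' : EuclideanSpace ℝ (Fin d) → EuclideanSpace ℝ (Fin d))
    (hg : ∀ x, HasGradientAt g (g' x) x)
    (hh : ∀ x, HasGradientAt h (h' x) x)
    (hgconv : ConvexOn ℝ Set.univ g)
    (hhconv : ConvexOn ℝ Set.univ h)
    (C : Set (EuclideanSpace ℝ (Fin d))) (hC : Convex ℝ C)
    (xk xk1 xstar : EuclideanSpace ℝ (Fin d))
    (hxk : xk ∈ C) (hxk1 : xk1 ∈ C) (hxstar : xstar ∈ C)
    -- xk1 minimizes g(x) - ⟨∇h(xk), x⟩ over C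
    (hupd : ∀ x ∈ C, g xk1 - ⟪h' xk, xk1⟫ ≤ g x - ⟪h' xk, x⟫)
    -- xstar is the global minimizer of f = g - h over C
    (hglob : ∀ x ∈ C, g xstar - h xstar ≤ g x - h x)
    -- optimality condition: ∇h(xk) = ∇g(xk1) + ŷ with ŷ in the normal cone at xk1
    (yhat : EuclideanSpace ℝ (Fin d))
    (hyhat : h' xk = g' xk1 + yhat)
    (hnormal : ∀ x ∈ C, ⟪yhat, x - xk1⟫ ≤ 0)
    -- hstar is the convex conjugate of h, via the Fenchel identity
    (hstar : EuclideanSpace ℝ (Fin d) → ℝ)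
    (hFenchel : ∀ x, hstar (h' x) = ⟪h' x, x⟫ - h x)
    (μ : ℝ) (hμ : 0 < μ)
    -- extended PL inequality at xk1 for the particular normal-cone vector ŷ
    (hPL : μ * ((g xk1 - h xk1) - (g xstar - h xstar)) ≤
      hstar (g' xk1 + yhat) - hstar (h' xk1) - ⟪xk1, (g' xk1 + yhat) - h' xk1⟫) :
    (g xk1 - h xk1) - (g xstar - h xstar) ≤
      (1 / (1 + μ)) * ((g xk - h xk) - (g xstar - h xstar)) := by
  rw [← hyhat] at hPL
  rw [hFenchel xk, hFenchel xk1, inner_sub_right] at hPL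
  have hconv : h xk + ⟪h' xk, xk1 - xk⟫ ≤ h xk1 :=
    grad_convex_ineq h h' hh hhconv xk xk1
  rw [inner_sub_right] at hconv
  have hup := hupd xk hxk
  have hc1 : ⟪xk1, h' xk⟫ = ⟪h' xk, xk1⟫ := real_inner_comm _ _
  have hc2 : ⟪xk1, h' xk1⟫ = ⟪h' xk1, xk1⟫ := real_inner_comm _ _
  have key : μ * ((g xk1 - h xk1) - (g xstar - h xstar)) ≤
      (g xk - h xk) - (g xk1 - h xk1) := by linarith
  rw [div_mul_eq_mul_div, one_mul, le_div_iff₀ (by linarith)]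
  nlinarith [key]
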